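/- arXiv:1411.1120 — 4 statements merged into one kernel-verified Lean document; each statement's English description precedes it below -/
import Mathlib

section
/- Let r, x be real numbers with r² + x² ≠ 0, and let V_k, V_m be complex numbers. Define z = r + i·x, y = 1/z, I_km = y·(V_k − V_m), S_km = V_k·conj(I_km), P_km = Re(S_km), Q_km = Im(S_km). Then (P_km − r·|V_k|²/(r² + x²))² + (Q_km − x·|V_k|²/(r² + x²))² ≤ |V_k|²·|V_m|²/(r² + x²) (the circle inequality). -/
theorem circle_inequality (r x : ℝ) (hrx : r ^ 2 + x ^ 2 ≠ 0) (Vk Vm : ℂ)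
    (z y Ikm Skm : ℂ) (Pkm Qkm : ℝ)
    (hz : z = (r : ℂ) + (x : ℂ) * Complex.I)
    (hy : y = 1 / z)
    (hI : Ikm = y * (Vk - Vm))
    (hS : Skm = Vk * (starRingEnd ℂ) Ikm)
    (hP : Pkm = Skm.re)
    (hQ : Qkm = Skm.im) :
    (Pkm - r * ‖Vk‖ ^ 2 / (r ^ 2 + x ^ 2)) ^ 2
      + (Qkm - x * ‖Vk‖ ^ 2 / (r ^ 2 + x ^ 2)) ^ 2
      ≤ ‖Vk‖ ^ 2 * ‖Vm‖ ^ 2 / (r ^ 2 + x ^ 2) := by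
  subst hz hy hI hS hP hQ
  apply le_of_eq
  have hn : Complex.normSq ((r : ℂ) + (x : ℂ) * Complex.I) = r ^ 2 + x ^ 2 := by
    simp [Complex.normSq_apply]; ring
  simp only [Complex.sq_norm, Complex.normSq_apply, one_div, map_mul, Complex.mul_re,
    Complex.mul_im, map_sub, Complex.conj_re, Complex.conj_im, Complex.sub_re,
    Complex.sub_im, Complex.inv_re, Complex.inv_im, hn,
    Complex.add_re, Complex.add_im, Complex.mul_I_re, Complex.mul_I_im,
    Complex.ofReal_re, Complex.ofReal_im, Complex.I_re, Complex.I_im]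
  field_simp
  ring
end

section
/- Let r, x, g_sh, b_sh be real numbers with r² + x² ≠ 0, and let V_k, V_m be complex numbers. Define z = r + i·x, y = 1/z, y_sh = g_sh + i·b_sh, I_km = y·(V_k − V_m) + (1/2)·y_sh·V_k, S_km = V_k·conj(I_km), P_km = Re(S_km), Q_km = Im(S_km). Then (P_km − (r/(r² + x²) + g_sh/2)·|V_k|²)² + (Q_km − (x/(r² + x²) − b_sh/2)·|V_k|²)² ≤ |V_k|²·|V_m|²/(r² + x²) (the circle inequality with shunts). -/
theorem circle_inequality_shunt (r x gsh bsh : ℝ) (hrx : r ^ 2 + x ^ 2 ≠ 0) (Vk Vm : ℂ)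
    (z y ysh Ikm Skm : ℂ) (Pkm Qkm : ℝ)
    (hz : z = (r : ℂ) + (x : ℂ) * Complex.I)
    (hy : y = 1 / z)
    (hysh : ysh = (gsh : ℂ) + (bsh : ℂ) * Complex.I)
    (hI : Ikm = y * (Vk - Vm) + (1 / 2 : ℂ) * ysh * Vk)
    (hS : Skm = Vk * (starRingEnd ℂ) Ikm)
    (hP : Pkm = Skm.re)
    (hQ : Qkm = Skm.im) :
    (Pkm - (r / (r ^ 2 + x ^ 2) + gsh / 2) * ‖Vk‖ ^ 2) ^ 2
      + (Qkm - (x / (r ^ 2 + x ^ 2) - bsh / 2) * ‖Vk‖ ^ 2) ^ 2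
      ≤ ‖Vk‖ ^ 2 * ‖Vm‖ ^ 2 / (r ^ 2 + x ^ 2) := by
  set n := r ^ 2 + x ^ 2 with hn
  have hnz : Complex.normSq z = n := by
    rw [hz]; simp [Complex.normSq_apply, hn]; ring
  have hz0 : z ≠ 0 := fun h => hrx (by rw [← hnz, h, map_zero])
  have hyv : y = (starRingEnd ℂ) z * (n : ℂ)⁻¹ := by
    rw [hy, one_div, Complex.inv_def, hnz, Complex.ofReal_inv]
  have hcy : (starRingEnd ℂ) y = z * (n : ℂ)⁻¹ := by
    rw [hyv]; simp [map_mul, Complex.conj_conj, ← Complex.ofReal_inv]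
  set c : ℂ := ((r / n + gsh / 2 : ℝ) : ℂ) + ((x / n - bsh / 2 : ℝ) : ℂ) * Complex.I with hc
  have hnC : (n : ℂ) ≠ 0 := Complex.ofReal_ne_zero.mpr hrx
  have hcval : c = (starRingEnd ℂ) y + (starRingEnd ℂ) ysh / 2 := by
    rw [hc, hcy, hysh, hz]
    push_cast
    field_simp
    ring_nf
    try simp [Complex.I_sq]
    try ring
  have key : Skm - c * (Complex.normSq Vk : ℂ) = -((starRingEnd ℂ) y) * Vk * (starRingEnd ℂ) Vm := by
    rw [hS, hI, hcval, ← Complex.mul_conj]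
    simp only [map_add, map_mul, map_sub, map_one, map_div₀, map_ofNat]
    ring
  have hre : (Skm - c * (Complex.normSq Vk : ℂ)).re = Pkm - (r / n + gsh / 2) * ‖Vk‖ ^ 2 := by
    simp [hc, hP, Complex.sq_norm, Complex.add_re, Complex.mul_re]
  have him : (Skm - c * (Complex.normSq Vk : ℂ)).im = Qkm - (x / n - bsh / 2) * ‖Vk‖ ^ 2 := by
    simp [hc, hQ, Complex.sq_norm, Complex.mul_im]
  have := congrArg Complex.normSq key
  rw [Complex.normSq_apply, hre, him, ← sq, ← sq] at this
  rw [this]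
  apply le_of_eq
  simp only [Complex.normSq_mul, Complex.normSq_neg, Complex.normSq_conj]
  have hny : Complex.normSq y = n⁻¹ := by
    rw [hy, one_div, map_inv₀, hnz]
  rw [hny, ← Complex.sq_norm Vk, ← Complex.sq_norm Vm]
  field_simp
end

section
/- Let g, b, g_sh, b_sh, σ, e_k, f_k, e_m, f_m be real numbers, τ > 0, and g ≥ 0. Define y = g + i·b, y_sh = g_sh + i·b_sh, V_k = e_k + i·f_k, V_m = e_m + i·f_m, I_km = (1/τ)·y·((1/τ)·V_k − exp(i·σ)·V_m) + (1/(2τ²))·y_sh·V_k, I_mk = −(1/τ)·exp(−i·σ)·y·V_k + (y + y_sh/2)·V_m, P_km = Re(V_k·conj(I_km)), P_mk = Re(V_m·conj(I_mk)). Then g·(e_m − (1/τ)·(e_k·cos σ + f_k·sin σ))² + g·(f_m − (1/τ)·(f_k·cos σ − e_k·sin σ))² ≤ P_km + P_mk − (g_sh/2)·((e_k² + f_k²)/τ² + (e_m² + f_m²)) (the general loss inequality). -/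
theorem general_loss_inequality (g b gsh bsh σ ek fk em fm τ : ℝ) (hτ : 0 < τ) (hg : 0 ≤ g)
    (y ysh Vk Vm Ikm Imk : ℂ) (Pkm Pmk : ℝ)
    (hy : y = (g : ℂ) + (b : ℂ) * Complex.I)
    (hysh : ysh = (gsh : ℂ) + (bsh : ℂ) * Complex.I)
    (hVk : Vk = (ek : ℂ) + (fk : ℂ) * Complex.I)
    (hVm : Vm = (em : ℂ) + (fm : ℂ) * Complex.I)
    (hIkm : Ikm = (1 / (τ : ℂ)) * y * ((1 / (τ : ℂ)) * Vk - Complex.exp ((σ : ℂ) * Complex.I) * Vm)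
        + (1 / (2 * (τ : ℂ) ^ 2)) * ysh * Vk)
    (hImk : Imk = -(1 / (τ : ℂ)) * Complex.exp (-(σ : ℂ) * Complex.I) * y * Vk
        + (y + ysh / 2) * Vm)
    (hPkm : Pkm = (Vk * (starRingEnd ℂ) Ikm).re)
    (hPmk : Pmk = (Vm * (starRingEnd ℂ) Imk).re) :
    g * (em - (1 / τ) * (ek * Real.cos σ + fk * Real.sin σ)) ^ 2
      + g * (fm - (1 / τ) * (fk * Real.cos σ - ek * Real.sin σ)) ^ 2
      ≤ Pkm + Pmk - gsh / 2 * ((ek ^ 2 + fk ^ 2) / τ ^ 2 + (em ^ 2 + fm ^ 2)) := by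
  have hexp1 : Complex.exp ((σ : ℂ) * Complex.I)
      = (Real.cos σ : ℂ) + (Real.sin σ : ℂ) * Complex.I := by
    rw [Complex.exp_mul_I, Complex.ofReal_cos, Complex.ofReal_sin]
  have hexp2 : Complex.exp (-(σ : ℂ) * Complex.I)
      = (Real.cos σ : ℂ) - (Real.sin σ : ℂ) * Complex.I := by
    rw [Complex.exp_mul_I, Complex.cos_neg, Complex.sin_neg, Complex.ofReal_cos,
      Complex.ofReal_sin]
    ring
  have hτc : (1 : ℂ) / (2 * (τ : ℂ) ^ 2) = ((1 / (2 * τ ^ 2) : ℝ) : ℂ) := by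
    push_cast
    ring
  have hτc2 : (1 : ℂ) / (τ : ℂ) = ((1 / τ : ℝ) : ℂ) := by push_cast; ring
  subst hy hysh hVk hVm hIkm hImk hPkm hPmk
  rw [hexp1, hexp2, hτc, hτc2]
  have hτ' : (τ : ℝ) ≠ 0 := ne_of_gt hτ
  apply le_of_eq
  simp only [map_add, map_mul, map_sub, map_neg, map_div₀, map_one, map_ofNat,
    Complex.conj_I, Complex.conj_ofReal, Complex.add_re, Complex.add_im, Complex.mul_re,
    Complex.mul_im, Complex.sub_re, Complex.sub_im, Complex.neg_re, Complex.neg_im,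
    Complex.I_re, Complex.I_im, Complex.ofReal_re, Complex.ofReal_im, Complex.div_ofReal_re,
    Complex.div_ofReal_im, Complex.div_ofNat_re, Complex.div_ofNat_im]
  field_simp
  linear_combination (2 * g * (ek ^ 2 + fk ^ 2)) * Real.sin_sq_add_cos_sq σ
end

section
/- Let r, x, g_sh, b_sh, σ be real numbers with r² + x² ≠ 0 and τ > 0, and let V_k, V_m be complex numbers. Define z = r + i·x, y = 1/z, y_sh = g_sh + i·b_sh, I_km = (1/τ)·y·((1/τ)·V_k − exp(i·σ)·V_m) + (1/(2τ²))·y_sh·V_k, S_km = V_k·conj(I_km), P_km = Re(S_km), Q_km = Im(S_km). Then (P_km − (r/(r² + x²) + g_sh/2)·|V_k|²/τ²)² + (Q_km − (x/(r² + x²) − b_sh/2)·|V_k|²/τ²)² ≤ |V_k|²·|V_m|²/(τ²·(r² + x²)) (the general circle inequality at k). -/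
theorem general_circle_inequality_k (r x gsh bsh σ τ : ℝ) (hrx : r ^ 2 + x ^ 2 ≠ 0)
    (hτ : 0 < τ) (Vk Vm : ℂ)
    (z y ysh Ikm Skm : ℂ) (Pkm Qkm : ℝ)
    (hz : z = (r : ℂ) + (x : ℂ) * Complex.I)
    (hy : y = 1 / z)
    (hysh : ysh = (gsh : ℂ) + (bsh : ℂ) * Complex.I)
    (hI : Ikm = (1 / (τ : ℂ)) * y * ((1 / (τ : ℂ)) * Vk - Complex.exp ((σ : ℂ) * Complex.I) * Vm)
        + (1 / (2 * (τ : ℂ) ^ 2)) * ysh * Vk)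
    (hS : Skm = Vk * (starRingEnd ℂ) Ikm)
    (hP : Pkm = Skm.re)
    (hQ : Qkm = Skm.im) :
    (Pkm - (r / (r ^ 2 + x ^ 2) + gsh / 2) * ‖Vk‖ ^ 2 / τ ^ 2) ^ 2
      + (Qkm - (x / (r ^ 2 + x ^ 2) - bsh / 2) * ‖Vk‖ ^ 2 / τ ^ 2) ^ 2
      ≤ ‖Vk‖ ^ 2 * ‖Vm‖ ^ 2 / (τ ^ 2 * (r ^ 2 + x ^ 2)) := by
  have hτR : τ ≠ 0 := hτ.ne'
  have hτ0 : (τ : ℂ) ≠ 0 := by exact_mod_cast hτR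
  have hnz : Complex.normSq z = r ^ 2 + x ^ 2 := by
    rw [hz]; simp [Complex.normSq_apply]; ring
  have hz0 : z ≠ 0 := fun h => hrx (by rw [← hnz, h, map_zero])
  have hzre : z.re = r := by rw [hz]; simp
  have hzim : z.im = x := by rw [hz]; simp
  have hyre : y.re = r / (r ^ 2 + x ^ 2) := by
    rw [hy, one_div, Complex.inv_re, hnz, hzre]
  have hyim : y.im = -(x / (r ^ 2 + x ^ 2)) := by
    rw [hy, one_div, Complex.inv_im, hnz, hzim]; ring
  set w : ℂ := (1 / (τ : ℂ)) * Vk * (starRingEnd ℂ) (y * Complex.exp ((σ : ℂ) * Complex.I) * Vm) with hw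
  have hSkm : Skm = ((Complex.normSq Vk / τ ^ 2 : ℝ) : ℂ) *
      ((starRingEnd ℂ) y + (1 / 2 : ℂ) * (starRingEnd ℂ) ysh) - w := by
    rw [hS, hI, hw]
    simp only [map_add, map_mul, map_sub, map_div₀, map_one, Complex.conj_ofReal, map_pow,
      map_ofNat, Complex.ofReal_div, Complex.ofReal_pow]
    rw [← Complex.mul_conj]
    field_simp
    ring
  have hcre : ((starRingEnd ℂ) y + (1 / 2 : ℂ) * (starRingEnd ℂ) ysh).re
      = r / (r ^ 2 + x ^ 2) + gsh / 2 := by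
    rw [hysh]
    simp [Complex.add_re, Complex.mul_re, hyre]
    ring
  have hcim : ((starRingEnd ℂ) y + (1 / 2 : ℂ) * (starRingEnd ℂ) ysh).im
      = x / (r ^ 2 + x ^ 2) - bsh / 2 := by
    rw [hysh]
    simp [Complex.add_im, Complex.mul_im, hyim]
    ring
  have habsVk : ‖Vk‖ ^ 2 = Complex.normSq Vk := Complex.sq_norm Vk
  have hre : Pkm - (r / (r ^ 2 + x ^ 2) + gsh / 2) * ‖Vk‖ ^ 2 / τ ^ 2 = -w.re := by
    rw [hP, hSkm, habsVk, Complex.sub_re, Complex.mul_re, Complex.ofReal_re, Complex.ofReal_im,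
      hcre]
    ring
  have him : Qkm - (x / (r ^ 2 + x ^ 2) - bsh / 2) * ‖Vk‖ ^ 2 / τ ^ 2 = -w.im := by
    rw [hQ, hSkm, habsVk, Complex.sub_im, Complex.mul_im, Complex.ofReal_re, Complex.ofReal_im,
      hcim]
    ring
  have hnw : (-w.re) ^ 2 + (-w.im) ^ 2 = Complex.normSq w := by
    rw [Complex.normSq_apply]; ring
  rw [hre, him, hnw, hw]
  have habsexp : Complex.normSq (Complex.exp ((σ : ℂ) * Complex.I)) = 1 := by
    rw [← Complex.sq_norm, Complex.norm_exp_ofReal_mul_I]; norm_num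
  have hny : Complex.normSq y = 1 / (r ^ 2 + x ^ 2) := by
    rw [hy, one_div, map_inv₀, hnz, one_div]
  have h1 : Complex.normSq Vm = ‖Vm‖ ^ 2 := (Complex.sq_norm Vm).symm
  simp only [map_mul, Complex.normSq_conj, habsexp, hny, Complex.normSq_div, Complex.normSq_one,
    Complex.normSq_ofReal, ← habsVk, h1]
  apply le_of_eq
  field_simp
end
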